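/- Let X be a real 2n-dimensional manifold and let Ω be a smooth complex n-form on X which at each point x is an SL_n(ℂ)-structure on T_xX, i.e., dim_ℂ Ker Ω(x) = n and Ker Ω(x) ∩ conj(Ker Ω(x)) = {0}, where Ker Ω(x) = {v ∈ T_xX ⊗ ℂ : i_v Ω(x) = 0}. Let I_Ω be the almost complex structure on X defined by I_Ω v = −√−1 v for v ∈ Ker Ω and I_Ω v = √−1 v for v ∈ conj(Ker Ω). If dΩ = 0, then the almost complex structure I_Ω is integrable. -/

import Mathlib

/-!
Goto, Lemma 4-1-2.  We model the Cartan calculus of a real `2n`-dimensional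
manifold `X` algebraically: `R` is the ring of smooth complex-valued
functions, `L` the `R`-module of smooth complexified vector fields
`Γ(TX ⊗ ℂ)` with Lie bracket `br`, action `ev` on functions and complex
conjugation `conj`; a raw `p`-form is a map `(Fin p → L) → R`, and a complex
differential `p`-form is an alternating `R`-multilinear raw form.

An `SL_n(ℂ)`-structure is a complex `n`-form `Ω` whose pointwise kernel
`Ker Ω = {v : i_vΩ = 0}` has complex dimension `n` and satisfies
`Ker Ω ∩ conj(Ker Ω) = {0}`; it determines the almost complex structure `I_Ω`
with `T^{0,1} = Ker Ω` and `T^{1,0} = conj(Ker Ω)`.  By the Newlander–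
Nirenberg theorem, `I_Ω` is integrable if and only if `T^{0,1} = Ker Ω` is
involutive, i.e. closed under the Lie bracket; the lemma asserts that this
holds whenever `dΩ = 0`. -/

/-- raw `p`-forms with values in `R`. -/
abbrev RawForm (R L : Type*) (p : ℕ) := (Fin p → L) → R

variable {R L : Type*} [CommRing R] [AddCommGroup L] [Module R L]

/-- the `p`-tuple obtained from a `(p+1)`-tuple `u` by deleting the entries
`i` and `j` and prepending `w`. -/
def insertTwo {p : ℕ} (u : Fin (p + 1) → L) (w : L) (i j : Fin (p + 1)) :
    Fin p → L :=
  fun k =>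
    if k.1 = 0 then w
    else if k.1 - 1 < i.1 then u ⟨k.1 - 1, by have := k.2; omega⟩
    else if k.1 < j.1 then u ⟨k.1, by have := k.2; omega⟩
    else u ⟨k.1 + 1, by have := k.2; omega⟩

/-- the exterior derivative (Koszul formula), for the action `ev` of vector
fields on functions and the Lie bracket `br` of vector fields. -/
def exd (ev : L → R → R) (br : L → L → L) {p : ℕ} (η : RawForm R L p) :
    RawForm R L (p + 1) :=
  fun u =>
    (∑ i : Fin (p + 1), (-1 : R) ^ (i : ℕ) * ev (u i) (η (u ∘ i.succAbove))) +
      ∑ i : Fin (p + 1), ∑ j : Fin (p + 1),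
        if i < j then
          (-1 : R) ^ ((i : ℕ) + (j : ℕ)) * η (insertTwo u (br (u i) (u j)) i j)
        else 0

/-- `Ker Ω = {v ∈ Γ(TX ⊗ ℂ) : i_vΩ = 0}`. -/
def kerForm {m : ℕ} (Ω : RawForm R L (m + 1)) : Set L :=
  {v | ∀ w : Fin m → L, Ω (Fin.cons v w) = 0}

lemma omega_add {m : ℕ} (Ω : RawForm R L (m + 1))
    (hΩ_lin : ∀ (u : Fin (m + 1) → L) (i : Fin (m + 1)) (c : R) (x y : L),
      Ω (Function.update u i (c • x + y)) =
        c * Ω (Function.update u i x) + Ω (Function.update u i y))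
    (u : Fin (m + 1) → L) (i : Fin (m + 1)) (x y : L) :
    Ω (Function.update u i (x + y)) =
      Ω (Function.update u i x) + Ω (Function.update u i y) := by
  have := hΩ_lin u i 1 x y; simpa using this

lemma omega_swap {m : ℕ} (Ω : RawForm R L (m + 1))
    (hΩ_lin : ∀ (u : Fin (m + 1) → L) (i : Fin (m + 1)) (c : R) (x y : L),
      Ω (Function.update u i (c • x + y)) =
        c * Ω (Function.update u i x) + Ω (Function.update u i y))
    (hΩ_alt : ∀ (u : Fin (m + 1) → L) (i j : Fin (m + 1)),
      i ≠ j → u i = u j → Ω u = 0)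
    (u : Fin (m + 1) → L) (i j : Fin (m + 1)) (hij : i ≠ j) :
    Ω u = - Ω (Function.update (Function.update u i (u j)) j (u i)) := by
  set a := u i
  set b := u j
  have h0 : Ω (Function.update (Function.update u i (a + b)) j (a + b)) = 0 := by
    apply hΩ_alt _ i j hij
    simp [Function.update_of_ne hij, Function.update_of_ne (Ne.symm hij)]
  have e1 : Ω (Function.update (Function.update u i (a + b)) j (a + b)) =
      Ω (Function.update (Function.update u i (a + b)) j a) +
        Ω (Function.update (Function.update u i (a + b)) j b) :=
    omega_add Ω hΩ_lin _ j a b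
  have comm : ∀ x y : L, Function.update (Function.update u i x) j y =
      Function.update (Function.update u j y) i x := fun x y =>
    Function.update_comm hij x y u
  have e2 : Ω (Function.update (Function.update u i (a + b)) j a) =
      Ω (Function.update (Function.update u j a) i a) +
        Ω (Function.update (Function.update u j a) i b) := by
    rw [comm]; exact omega_add Ω hΩ_lin _ i a b
  have e3 : Ω (Function.update (Function.update u i (a + b)) j b) =
      Ω (Function.update (Function.update u j b) i a) +
        Ω (Function.update (Function.update u j b) i b) := by
    rw [comm]; exact omega_add Ω hΩ_lin _ i a b
  have z1 : Ω (Function.update (Function.update u j a) i a) = 0 := by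
    apply hΩ_alt _ i j hij
    simp [Function.update_of_ne hij, Function.update_of_ne (Ne.symm hij)]
  have z2 : Ω (Function.update (Function.update u j b) i b) = 0 := by
    apply hΩ_alt _ i j hij
    simp [Function.update_of_ne hij, Function.update_of_ne (Ne.symm hij)]
  have eu : Ω (Function.update (Function.update u j b) i a) = Ω u := by
    rw [← comm]
    simp [a, b, Function.update_eq_self]
  have hba : Ω (Function.update (Function.update u j a) i b) =
      Ω (Function.update (Function.update u i b) j a) := by rw [comm]
  rw [e1, e2, e3, z1, z2, eu, hba] at h0
  linear_combination h0


lemma ker_slot {m : ℕ} (Ω : RawForm R L (m + 1))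
    (hΩ_lin : ∀ (u : Fin (m + 1) → L) (i : Fin (m + 1)) (c : R) (x y : L),
      Ω (Function.update u i (c • x + y)) =
        c * Ω (Function.update u i x) + Ω (Function.update u i y))
    (hΩ_alt : ∀ (u : Fin (m + 1) → L) (i j : Fin (m + 1)),
      i ≠ j → u i = u j → Ω u = 0)
    {v : L} (hv : v ∈ kerForm Ω) (u : Fin (m + 1) → L) (i : Fin (m + 1))
    (hui : u i = v) : Ω u = 0 := by
  have zero_case : ∀ u' : Fin (m + 1) → L, u' 0 = v → Ω u' = 0 := by
    intro u' h0
    have : u' = Fin.cons v (fun k => u' k.succ) := by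
      funext k
      cases k using Fin.cases with
      | zero => simpa using h0
      | succ k => simp
    rw [this]; exact hv _
  rcases eq_or_ne i 0 with rfl | hne
  · exact zero_case u hui
  · rw [omega_swap Ω hΩ_lin hΩ_alt u 0 i (Ne.symm hne)]
    rw [zero_case _ (by simp [Function.update_of_ne (Ne.symm hne), hui]), neg_zero]

/-- **Lemma 4-1-2** (Goto).  Let `X` be a real `2n`-dimensional manifold and
`Ω` a smooth complex `n`-form on `X` which at each point is an
`SL_n(ℂ)`-structure, i.e. `dim_ℂ Ker Ω = n` and `Ker Ω ∩ conj(Ker Ω) = {0}`,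
and let `I_Ω` be the almost complex structure with `I_Ω = -√-1` on `Ker Ω`
and `I_Ω = √-1` on `conj(Ker Ω)`.  If `dΩ = 0`, then `I_Ω` is integrable:
by Newlander–Nirenberg, the `(0,1)`-distribution `T^{0,1} = Ker Ω` is
involutive, i.e. closed under the Lie bracket of complexified vector fields. -/
theorem closed_SLnC_structure_integrable
    (ev : L → R → R) (br : L → L → L) (conj : L → L)
    -- Cartan-calculus axioms for vector fields
    (hev_add : ∀ v : L, ∀ f g : R, ev v (f + g) = ev v f + ev v g)
    (hev_leibniz : ∀ v : L, ∀ f g : R, ev v (f * g) = f * ev v g + ev v f * g)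
    (hbr_antisymm : ∀ u v : L, br u v = -br v u)
    (hbr_leibniz : ∀ u v : L, ∀ f : R, br u (f • v) = f • br u v + ev u f • v)
    (hbr_jacobi : ∀ u v w : L,
      br u (br v w) + br v (br w u) + br w (br u v) = 0)
    (hconj_invol : ∀ v, conj (conj v) = v)
    {m : ℕ}
    -- `Ω` is a complex `n`-form (`n = m + 1`): alternating and `R`-multilinear
    (Ω : RawForm R L (m + 1))
    (hΩ_lin : ∀ (u : Fin (m + 1) → L) (i : Fin (m + 1)) (c : R) (x y : L),
      Ω (Function.update u i (c • x + y)) =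
        c * Ω (Function.update u i x) + Ω (Function.update u i y))
    (hΩ_alt : ∀ (u : Fin (m + 1) → L) (i j : Fin (m + 1)),
      i ≠ j → u i = u j → Ω u = 0)
    -- the pointwise `SL_n(ℂ)` conditions: `L = Ker Ω ⊕ conj(Ker Ω)`
    (hker_span : ∀ v : L, ∃ x ∈ kerForm Ω, ∃ y ∈ kerForm Ω, v = x + conj y)
    (hker_indep : ∀ v : L, v ∈ kerForm Ω → conj v ∈ kerForm Ω → v = 0)
    -- `Ω` is closed
    (hΩ_closed : ∀ u : Fin (m + 2) → L, exd ev br Ω u = 0) :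
    ∀ v ∈ kerForm Ω, ∀ w ∈ kerForm Ω, br v w ∈ kerForm Ω := by
  intro v hv w hw w'
  have hev0 : ∀ x : L, ev x 0 = 0 := by
    intro x
    have h := hev_add x 0 0
    rw [add_zero] at h
    exact (left_eq_add.mp h)
  set u : Fin (m + 2) → L := Fin.cons v (Fin.cons w w') with hu
  have hu0 : u 0 = v := rfl
  have hu1 : u 1 = w := rfl
  have h := hΩ_closed u
  rw [exd] at h
  have hsum1 : (∑ i : Fin (m + 2), (-1 : R) ^ (i : ℕ) * ev (u i) (Ω (u ∘ i.succAbove))) = 0 := by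
    apply Finset.sum_eq_zero
    intro i _
    rcases eq_or_ne i 0 with rfl | hi
    · have h0 : (u ∘ Fin.succAbove 0) 0 = w := by
        simp [Fin.succAbove, hu1]
      rw [ker_slot Ω hΩ_lin hΩ_alt hw _ 0 h0, hev0, mul_zero]
    · have h0 : (u ∘ Fin.succAbove i) 0 = v := by
        have : Fin.succAbove i 0 = 0 := by
          simp [Fin.succAbove]
          exact if_pos (Fin.pos_of_ne_zero hi)
        simp [this, hu0]
      rw [ker_slot Ω hΩ_lin hΩ_alt hv _ 0 h0, hev0, mul_zero]
  have hterm01 : insertTwo u (br (u 0) (u 1)) 0 1 = Fin.cons (br v w) w' := by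
    funext k
    cases k using Fin.cases with
    | zero => rfl
    | succ k =>
      show insertTwo u (br (u 0) (u 1)) 0 1 k.succ = w' k
      rw [insertTwo]
      simp only [Fin.val_succ]
      have h1 : ¬ (k.1 + 1 = 0) := by omega
      have h2 : ¬ (k.1 + 1 - 1 < (0 : Fin (m+2)).1) := by simp
      have h3 : ¬ (k.1 + 1 < (1 : Fin (m+2)).1) := by
        simp [Fin.val_one]
      rw [if_neg h1, if_neg h2, if_neg h3]
      show u ⟨k.1 + 1 + 1, _⟩ = w' k
      have : (⟨k.1 + 1 + 1, by omega⟩ : Fin (m + 2)) = k.succ.succ := rfl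
      rw [this, hu]
      simp
  have hsum2 : (∑ i : Fin (m + 2), ∑ j : Fin (m + 2),
      if i < j then
        (-1 : R) ^ ((i : ℕ) + (j : ℕ)) * Ω (insertTwo u (br (u i) (u j)) i j)
      else 0) = - Ω (Fin.cons (br v w) w') := by
    rw [Finset.sum_eq_single (0 : Fin (m + 2))]
    · rw [Finset.sum_eq_single (1 : Fin (m + 2))]
      · rw [if_pos (by simp [Fin.lt_def]), hterm01]
        ring_nf
        simp
      · intro j _ hj1
        rcases eq_or_ne (0 : Fin (m+2)) j with rfl | hj0
        · simp
        · rw [if_pos (Fin.pos_of_ne_zero (Ne.symm hj0))]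
          have hj2 : 2 ≤ j.1 := by
            have e1 : j.1 ≠ 1 := by simpa using Fin.val_ne_of_ne hj1
            have e0 : j.1 ≠ 0 := by simpa using Fin.val_ne_of_ne (Ne.symm hj0)
            omega
          have hm : 1 < m + 1 := by have := j.2; omega
          have hslot : insertTwo u (br (u 0) (u j)) 0 j ⟨1, hm⟩ = w := by
            rw [insertTwo]
            have h1 : ¬ ((1:ℕ) = 0) := by omega
            have h2 : ¬ ((1:ℕ) - 1 < (0 : Fin (m+2)).1) := by simp
            have h3 : (1:ℕ) < j.1 := by omega
            rw [if_neg h1, if_neg h2, if_pos h3]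
            exact hu1
          rw [ker_slot Ω hΩ_lin hΩ_alt hw _ _ hslot, mul_zero]
      · simp
    · intro i _ hi0
      apply Finset.sum_eq_zero
      intro j _
      rcases lt_or_ge i j with hij | hij
      · rw [if_pos hij]
        have hi1 : i.1 ≠ 0 := by simpa using Fin.val_ne_of_ne hi0
        have hij' : i.1 < j.1 := hij
        have hm : 1 < m + 1 := by have := j.2; omega
        have hslot : insertTwo u (br (u i) (u j)) i j ⟨1, hm⟩ = v := by
          rw [insertTwo]
          have h1 : ¬ ((1:ℕ) = 0) := by omega
          have h2 : (1:ℕ) - 1 < i.1 := by omega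
          rw [if_neg h1, if_pos h2]
          exact hu0
        rw [ker_slot Ω hΩ_lin hΩ_alt hv _ _ hslot, mul_zero]
      · rw [if_neg (not_lt.mpr hij)]
    · simp
  rw [hsum1, hsum2, zero_add] at h
  linear_combination -h
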